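/- Let G be a finitely generated group acting by homeomorphisms on an R-tree T with a non-nesting action. If every element of G is elliptic, then G has a global fixed point in T. -/

import Mathlib

open Set

section TreeDefs

/-- `A` is an arc from `a` to `b`: a homeomorphic image of `[0,1]` with endpoints `a,b`. -/
def ArcFrom {T : Type*} [TopologicalSpace T] (a b : T) (A : Set T) : Prop :=
  ∃ f : ℝ → T, ContinuousOn f (Set.Icc 0 1) ∧ Set.InjOn f (Set.Icc 0 1) ∧
    f 0 = a ∧ f 1 = b ∧ f '' Set.Icc 0 1 = A

/-- `T` is uniquely arcwise connected: any two distinct points are joined by a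
unique arc. Together with metrizability this is the definition of an `ℝ`-tree. -/
def IsRTree (T : Type*) [TopologicalSpace T] : Prop :=
  ∀ a b : T, a ≠ b →
    (∃ A : Set T, ArcFrom a b A) ∧
    ∀ A A' : Set T, ArcFrom a b A → ArcFrom a b A' → A = A'

/-- The action is non-nesting: no group element maps a closed arc properly into itself. -/
def NonNesting (G T : Type*) [TopologicalSpace T] [Group G] [MulAction G T] : Prop :=
  ∀ (g : G) (a b : T) (A : Set T), ArcFrom a b A → ¬((fun x => g • x) '' A ⊂ A)

/-- A ray: a subspace homeomorphic to `[0,∞)`. -/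
def IsRay {T : Type*} [TopologicalSpace T] (R : Set T) : Prop :=
  Nonempty (↥R ≃ₜ ↥(Set.Ici (0 : ℝ)))

end TreeDefs



section RTreeAux

variable {T : Type*} [MetricSpace T]

lemma mem01 : (0:ℝ) ∈ Icc (0:ℝ) 1 := by constructor <;> norm_num
lemma mem11 : (1:ℝ) ∈ Icc (0:ℝ) 1 := by constructor <;> norm_num

lemma arc_ne {a b : T} {A : Set T} (h : ArcFrom a b A) : a ≠ b := by
  obtain ⟨f, _, hi, h0, h1, _⟩ := h
  intro hab
  have : (0:ℝ) = 1 := hi mem01 mem11 (by rw [h0, h1, hab])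
  norm_num at this

lemma arc_left_mem {a b : T} {A : Set T} (h : ArcFrom a b A) : a ∈ A := by
  obtain ⟨f, _, _, h0, _, him⟩ := h
  rw [← him]; exact ⟨0, mem01, h0⟩

lemma arc_right_mem {a b : T} {A : Set T} (h : ArcFrom a b A) : b ∈ A := by
  obtain ⟨f, _, _, _, h1, him⟩ := h
  rw [← him]; exact ⟨1, mem11, h1⟩

lemma arc_isCompact {a b : T} {A : Set T} (h : ArcFrom a b A) : IsCompact A := by
  obtain ⟨f, hc, _, _, _, him⟩ := h
  rw [← him]; exact isCompact_Icc.image_of_continuousOn hc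

lemma arc_isClosed {a b : T} {A : Set T} (h : ArcFrom a b A) : IsClosed A :=
  (arc_isCompact h).isClosed

lemma arc_symm {a b : T} {A : Set T} (h : ArcFrom a b A) : ArcFrom b a A := by
  obtain ⟨f, hc, hi, h0, h1, him⟩ := h
  have hmaps : MapsTo (fun t : ℝ => 1 - t) (Icc 0 1) (Icc 0 1) := by
    intro t ht
    simp only [mem_Icc] at ht ⊢
    constructor <;> linarith [ht.1, ht.2]
  refine ⟨fun t => f (1 - t), hc.comp (by fun_prop) hmaps, ?_, by simpa using h1,
    by simpa using h0, ?_⟩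
  · intro s hs t ht hst
    have : (1:ℝ) - s = 1 - t := hi (hmaps hs) (hmaps ht) hst
    linarith
  · rw [← him]
    have : (fun t : ℝ => 1 - t) '' Icc 0 1 = Icc 0 1 := by
      ext x; simp only [mem_image, mem_Icc]
      constructor
      · rintro ⟨y, hy, rfl⟩; exact ⟨by linarith [hy.2], by linarith [hy.1]⟩
      · intro hx; exact ⟨1 - x, ⟨by linarith [hx.2], by linarith [hx.1]⟩, by ring⟩
    rw [← this, image_image]
    simp

lemma arc_image {a b : T} {A : Set T} (h : ArcFrom a b A) {φ : T → T}
    (hφc : Continuous φ) (hφi : Function.Injective φ) :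
    ArcFrom (φ a) (φ b) (φ '' A) := by
  obtain ⟨f, hc, hi, h0, h1, him⟩ := h
  exact ⟨φ ∘ f, hφc.comp_continuousOn hc, fun s hs t ht hst => hi hs ht (hφi hst),
    by simp [h0], by simp [h1], by rw [image_comp, him]⟩

lemma arc_eq (hRT : IsRTree T) {a b : T} {A A' : Set T}
    (h : ArcFrom a b A) (h' : ArcFrom a b A') : A = A' := by
  exact (hRT a b (arc_ne h)).2 A A' h h'

/-- subarc with explicit parametrization data -/
lemma subarc {f : ℝ → T} (hc : ContinuousOn f (Icc 0 1)) (hi : InjOn f (Icc 0 1))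
    {s t : ℝ} (hs : 0 ≤ s) (hst : s < t) (ht : t ≤ 1) :
    ArcFrom (f s) (f t) (f '' Icc s t) := by
  have hsub : Icc s t ⊆ Icc 0 1 := Icc_subset_Icc hs ht
  have hmaps : MapsTo (fun u : ℝ => s + u * (t - s)) (Icc 0 1) (Icc s t) := by
    intro u hu
    simp only [mem_Icc] at hu ⊢
    constructor
    · nlinarith [hu.1, hu.2]
    · nlinarith [hu.1, hu.2]
  refine ⟨fun u => f (s + u * (t - s)), hc.comp (by fun_prop) (hmaps.mono_right hsub),
    ?_, by simp, by simp [show s + 1 * (t - s) = t by ring], ?_⟩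
  · intro u hu v hv huv
    have := hi (hsub (hmaps hu)) (hsub (hmaps hv)) huv
    have hts : t - s ≠ 0 := by linarith
    exact mul_right_cancel₀ hts (by linarith)
  · have : (fun u : ℝ => s + u * (t - s)) '' Icc 0 1 = Icc s t := by
      ext x; simp only [mem_image, mem_Icc]
      constructor
      · rintro ⟨u, hu, rfl⟩; exact (hmaps hu)
      · intro hx
        refine ⟨(x - s) / (t - s), ⟨?_, ?_⟩, ?_⟩
        · apply div_nonneg (by linarith [hx.1]) (by linarith)
        · rw [div_le_one (by linarith)]; linarith [hx.2]
        · rw [div_mul_cancel₀ _ (by linarith : t - s ≠ 0)]; ring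
    rw [← this, image_image]

lemma exists_arc (hRT : IsRTree T) {a b : T} (hab : a ≠ b) : ∃ A, ArcFrom a b A :=
  (hRT a b hab).1

/-- first point where an arc hits a closed set -/
lemma firsthit {f : ℝ → T} (hc : ContinuousOn f (Icc 0 1)) (hi : InjOn f (Icc 0 1))
    {C : Set T} (hC : IsClosed C) (h0 : f 0 ∉ C) (h1 : f 1 ∈ C) :
    ∃ s, 0 < s ∧ s ≤ 1 ∧ f s ∈ C ∧ (f '' Icc 0 s) ∩ C = {f s} := by
  set S : Set ℝ := Icc 0 1 ∩ f ⁻¹' C with hS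
  have hScl : IsClosed S := hc.preimage_isClosed_of_isClosed isClosed_Icc hC
  have hne : S.Nonempty := ⟨1, mem11, h1⟩
  have hbdd : BddBelow S := ⟨0, fun x hx => hx.1.1⟩
  set s := sInf S with hs
  have hsS : s ∈ S := hScl.csInf_mem hne hbdd
  have hs1 : s ≤ 1 := csInf_le hbdd ⟨mem11, h1⟩
  have hs0 : 0 < s := by
    rcases lt_or_eq_of_le hsS.1.1 with h | h
    · exact h
    · exact absurd (h ▸ hsS.2 : f 0 ∈ C) h0
  refine ⟨s, hs0, hs1, hsS.2, ?_⟩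
  apply Subset.antisymm
  · rintro y ⟨⟨t, ht, rfl⟩, hyC⟩
    have htS : t ∈ S := ⟨⟨ht.1, le_trans ht.2 hs1⟩, hyC⟩
    have : s ≤ t := csInf_le hbdd htS
    have : t = s := le_antisymm ht.2 this
    simp [this]
  · rintro y rfl
    exact ⟨⟨s, ⟨hs0.le, le_refl s⟩, rfl⟩, hsS.2⟩


lemma concat_param {f₁ f₂ : ℝ → T} (hc₁ : ContinuousOn f₁ (Icc 0 1))
    (hi₁ : InjOn f₁ (Icc 0 1)) (hc₂ : ContinuousOn f₂ (Icc 0 1))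
    (hi₂ : InjOn f₂ (Icc 0 1)) (hm : f₁ 1 = f₂ 0)
    (hint : f₁ '' Icc 0 1 ∩ f₂ '' Icc 0 1 = {f₁ 1}) :
    ∃ γ : ℝ → T, ContinuousOn γ (Icc 0 1) ∧ InjOn γ (Icc 0 1) ∧ γ 0 = f₁ 0 ∧
      γ 1 = f₂ 1 ∧ γ '' Icc 0 1 = f₁ '' Icc 0 1 ∪ f₂ '' Icc 0 1 ∧ γ (1/2) = f₁ 1 ∧
      γ '' Icc 0 (1/2) = f₁ '' Icc 0 1 ∧ γ '' Icc (1/2) 1 = f₂ '' Icc 0 1 := by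
  set γ : ℝ → T := fun t => if t ≤ 1/2 then f₁ (2*t) else f₂ (2*t - 1) with hγ
  have hmaps₁ : MapsTo (fun t : ℝ => 2*t) (Icc 0 (1/2)) (Icc 0 1) := by
    intro t ht; simp only [mem_Icc] at *; constructor <;> linarith [ht.1, ht.2]
  have hmaps₂ : MapsTo (fun t : ℝ => 2*t - 1) (Icc (1/2) 1) (Icc 0 1) := by
    intro t ht; simp only [mem_Icc] at *; constructor <;> linarith [ht.1, ht.2]
  have heq₁ : EqOn γ (fun t => f₁ (2*t)) (Icc 0 (1/2)) := by
    intro t ht; simp only [hγ, if_pos ht.2]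
  have heq₂ : EqOn γ (fun t => f₂ (2*t - 1)) (Icc (1/2) 1) := by
    intro t ht
    rcases eq_or_lt_of_le ht.1 with h | h
    · simp only [hγ, ← h]
      rw [if_pos le_rfl]
      norm_num [hm]
    · simp only [hγ, if_neg (not_le.mpr h)]
  have hcA : ContinuousOn γ (Icc 0 (1/2)) :=
    (hc₁.comp (by fun_prop) hmaps₁).congr heq₁
  have hcB : ContinuousOn γ (Icc (1/2) 1) :=
    (hc₂.comp (by fun_prop) hmaps₂).congr heq₂
  have hcov : Icc (0:ℝ) 1 ⊆ Icc 0 (1/2) ∪ Icc (1/2) 1 := by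
    rw [Icc_union_Icc_eq_Icc (by norm_num) (by norm_num)]
  have hcont : ContinuousOn γ (Icc 0 1) := by
    refine ContinuousOn.mono ?_ hcov
    intro t ht
    have c1 : ContinuousWithinAt γ (Icc 0 (1/2)) t := by
      by_cases h : t ∈ Icc (0:ℝ) (1/2)
      · exact hcA t h
      · exact continuousWithinAt_of_notMem_closure (by rwa [isClosed_Icc.closure_eq])
    have c2 : ContinuousWithinAt γ (Icc (1/2) 1) t := by
      by_cases h : t ∈ Icc (1/2:ℝ) 1
      · exact hcB t h
      · exact continuousWithinAt_of_notMem_closure (by rwa [isClosed_Icc.closure_eq])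
    exact c1.union c2
  have him₁ : γ '' Icc 0 (1/2) = f₁ '' Icc 0 1 := by
    rw [image_congr heq₁]
    have : (fun t : ℝ => 2*t) '' Icc 0 (1/2) = Icc 0 1 := by
      ext x; simp only [mem_image, mem_Icc]
      constructor
      · rintro ⟨y, hy, rfl⟩; constructor <;> linarith [hy.1, hy.2]
      · intro hx; exact ⟨x/2, ⟨by linarith [hx.1], by linarith [hx.2]⟩, by ring⟩
    calc (fun t => f₁ (2*t)) '' Icc 0 (1/2) = f₁ '' ((fun t : ℝ => 2*t) '' Icc 0 (1/2)) := by
          rw [image_image]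
      _ = f₁ '' Icc 0 1 := by rw [this]
  have him₂ : γ '' Icc (1/2) 1 = f₂ '' Icc 0 1 := by
    rw [image_congr heq₂]
    have : (fun t : ℝ => 2*t - 1) '' Icc (1/2) 1 = Icc 0 1 := by
      ext x; simp only [mem_image, mem_Icc]
      constructor
      · rintro ⟨y, hy, rfl⟩; constructor <;> linarith [hy.1, hy.2]
      · intro hx; exact ⟨(x+1)/2, ⟨by linarith [hx.1], by linarith [hx.2]⟩, by ring⟩
    calc (fun t => f₂ (2*t - 1)) '' Icc (1/2) 1
        = f₂ '' ((fun t : ℝ => 2*t - 1) '' Icc (1/2) 1) := by rw [image_image]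
      _ = f₂ '' Icc 0 1 := by rw [this]
  have hsplit : Icc (0:ℝ) 1 = Icc 0 (1/2) ∪ Icc (1/2) 1 :=
    (Icc_union_Icc_eq_Icc (by norm_num) (by norm_num)).symm
  have hinj : InjOn γ (Icc 0 1) := by
    intro s hs t ht hst
    have hmem : ∀ u : ℝ, u ∈ Icc (0:ℝ) 1 → (u ∈ Icc (0:ℝ) (1/2) ∨ u ∈ Icc (1/2:ℝ) 1) := by
      intro u hu; rcases le_or_gt u (1/2) with h | h
      · exact Or.inl ⟨hu.1, h⟩
      · exact Or.inr ⟨h.le, hu.2⟩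
    have key : ∀ u v : ℝ, u ∈ Icc (0:ℝ) (1/2) → v ∈ Icc (1/2:ℝ) 1 → γ u = γ v → u = v := by
      intro u v hu hv huv
      rw [heq₁ hu, heq₂ hv] at huv
      simp only [] at huv
      have h1 : f₁ (2*u) ∈ f₁ '' Icc 0 1 ∩ f₂ '' Icc 0 1 := by
        constructor
        · exact ⟨2*u, hmaps₁ hu, rfl⟩
        · rw [huv]; exact ⟨2*v - 1, hmaps₂ hv, rfl⟩
      rw [hint] at h1
      have h2 : (2:ℝ)*u = 1 := hi₁ (hmaps₁ hu) (by norm_num) h1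
      have h3 : f₂ (2*v - 1) = f₂ 0 := by rw [← huv, h1, hm]
      have h4 : (2:ℝ)*v - 1 = 0 := hi₂ (hmaps₂ hv) (by norm_num) h3
      linarith
    rcases hmem s hs with h | h <;> rcases hmem t ht with h' | h'
    · have := hi₁ (hmaps₁ h) (hmaps₁ h') (by rw [heq₁ h, heq₁ h'] at hst; exact hst)
      simp only [] at this; linarith
    · exact key s t h h' hst
    · exact (key t s h' h hst.symm).symm
    · have := hi₂ (hmaps₂ h) (hmaps₂ h') (by rw [heq₂ h, heq₂ h'] at hst; exact hst)
      simp only [] at this; linarith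
  refine ⟨γ, hcont, hinj, ?_, ?_, ?_, ?_, him₁, him₂⟩
  · show γ 0 = f₁ 0; rw [heq₁ (by norm_num : (0:ℝ) ∈ Icc (0:ℝ) (1/2))]; norm_num
  · show γ 1 = f₂ 1; rw [heq₂ (by norm_num : (1:ℝ) ∈ Icc (1/2:ℝ) 1)]; norm_num
  · conv_lhs => rw [hsplit]
    rw [image_union, him₁, him₂]
  · rw [heq₁ (by norm_num : (1/2:ℝ) ∈ Icc (0:ℝ) (1/2))]; norm_num

end RTreeAux

section ActionAux
variable {T G : Type*} [MetricSpace T] [Group G] [MulAction G T]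

lemma smul_arc (hcont : ∀ g : G, Continuous fun x : T => g • x) (g : G)
    {a b : T} {A : Set T} (h : ArcFrom a b A) :
    ArcFrom (g • a) (g • b) ((fun x => g • x) '' A) :=
  arc_image h (hcont g) (MulAction.injective g)

lemma shift_key (hRT : IsRTree T) (hcont : ∀ g : G, Continuous fun x : T => g • x)
    (hnn : NonNesting G T) {f : ℝ → T} (hc : ContinuousOn f (Icc 0 1))
    (hi : InjOn f (Icc 0 1)) (k : G) (hend : k • f 1 = f 1)
    {u v : ℝ} (hv0 : 0 ≤ v) (hvu : v < u) (hu1 : u < 1) (hk : k • f v = f u) : False := by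
  have hv1 : v < 1 := lt_trans hvu hu1
  have hu0 : 0 ≤ u := le_trans hv0 hvu.le
  have hAv : ArcFrom (f v) (f 1) (f '' Icc v 1) := subarc hc hi hv0 hv1 le_rfl
  have hAu : ArcFrom (f u) (f 1) (f '' Icc u 1) := subarc hc hi hu0 hu1 le_rfl
  have himg : (fun x => k • x) '' (f '' Icc v 1) = f '' Icc u 1 := by
    have h1 := smul_arc hcont k hAv
    rw [hk, hend] at h1
    exact arc_eq hRT h1 hAu
  refine hnn k (f v) (f 1) (f '' Icc v 1) hAv ?_
  rw [himg]
  constructor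
  · exact image_mono (f := f) (Icc_subset_Icc hvu.le le_rfl)
  · intro hsub
    have : f v ∈ f '' Icc u 1 := hsub ⟨v, ⟨le_rfl, hv1.le⟩, rfl⟩
    obtain ⟨w, hw, hfw⟩ := this
    have : w = v := hi (Icc_subset_Icc hu0 le_rfl hw) ⟨hv0, hv1.le⟩ hfw
    rw [this] at hw
    exact absurd hw.1 (not_le.mpr hvu)

lemma shift_eq (hRT : IsRTree T) (hcont : ∀ g : G, Continuous fun x : T => g • x)
    (hnn : NonNesting G T) {f : ℝ → T} (hc : ContinuousOn f (Icc 0 1))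
    (hi : InjOn f (Icc 0 1)) {g : G} (hend : g • f 1 = f 1)
    {t t' : ℝ} (ht : t ∈ Ico (0:ℝ) 1) (ht' : t' ∈ Ico (0:ℝ) 1)
    (h : g • f t' = f t) : t = t' := by
  have hend' : g⁻¹ • f 1 = f 1 := by rw [inv_smul_eq_iff]; exact hend.symm
  have h' : g⁻¹ • f t = f t' := by rw [inv_smul_eq_iff]; exact h.symm
  rcases lt_trichotomy t t' with H | H | H
  · exact (shift_key hRT hcont hnn hc hi g⁻¹ hend' ht.1 H ht'.2 h').elim
  · exact H
  · exact (shift_key hRT hcont hnn hc hi g hend ht'.1 H ht.2 h).elim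

lemma fix_convex (hRT : IsRTree T) (hcont : ∀ g : G, Continuous fun x : T => g • x)
    (hnn : NonNesting G T) {g : G} {a b : T} {A : Set T}
    (ha : g • a = a) (hb : g • b = b) (hA : ArcFrom a b A) :
    ∀ y ∈ A, g • y = y := by
  obtain ⟨f, hc, hi, h0, h1, him⟩ := hA
  have hA' : ArcFrom a b A := ⟨f, hc, hi, h0, h1, him⟩
  have hgA : (fun x => g • x) '' A = A := by
    have := smul_arc hcont g hA'
    rw [ha, hb] at this
    exact arc_eq hRT this hA'
  intro y hy
  rw [← him] at hy
  obtain ⟨t, htI, rfl⟩ := hy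
  have hmem : g • f t ∈ A := by
    rw [← hgA]; exact ⟨f t, by rw [← him]; exact ⟨t, htI, rfl⟩, rfl⟩
  rw [← him] at hmem
  obtain ⟨t', ht'I, ht'⟩ := hmem
  have hend : g • f 1 = f 1 := by rw [h1, hb]
  rcases eq_or_lt_of_le htI.2 with h | hlt
  · rw [h, hend]
  rcases eq_or_lt_of_le ht'I.2 with h | hlt'
  · -- t' = 1 : g • f t = f 1 = b, so f t = b = f 1, contradiction with t < 1
    rw [h, h1] at ht'
    have hfb : f t = b := smul_left_cancel g (by rw [← ht', hb])
    have ht1 : t = 1 := hi htI (by norm_num : (1:ℝ) ∈ Icc (0:ℝ) 1) (by rw [hfb, h1])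
    exact absurd ht1 (ne_of_lt hlt)
  · have := shift_eq hRT hcont hnn hc hi hend ⟨ht'I.1, hlt'⟩ ⟨htI.1, hlt⟩ ht'.symm
    rw [← ht', this]

lemma proj_exists (hRT : IsRTree T) {C : Set T} (hC : IsClosed C) {x y : T}
    (hy : y ∈ C) (hx : x ∉ C) :
    ∃ p ∈ C, ∃ f : ℝ → T, ContinuousOn f (Icc 0 1) ∧ InjOn f (Icc 0 1) ∧
      f 0 = x ∧ f 1 = p ∧ (f '' Icc 0 1) ∩ C = {p} := by
  have hxy : x ≠ y := fun h => hx (h ▸ hy)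
  obtain ⟨A, hA⟩ := exists_arc hRT hxy
  obtain ⟨f₀, hc, hi, h0, h1, him⟩ := hA
  obtain ⟨s, hs0, hs1, hsC, hmeet⟩ := firsthit hc hi hC (h0 ▸ hx) (h1 ▸ hy)
  obtain ⟨f, hfc, hfi, hf0, hf1, hfim⟩ := subarc hc hi le_rfl hs0 hs1
  exact ⟨f₀ s, hsC, f, hfc, hfi, by rw [hf0, h0], hf1, by rw [hfim]; exact hmeet⟩

/-- reflection: concatenate the projection arc `[x,p]` with its `g`-image to get `[x, g•x]` -/
lemma reflect (hRT : IsRTree T) (hcont : ∀ g : G, Continuous fun x : T => g • x)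
    (hnn : NonNesting G T) {g : G} {x p : T} {f : ℝ → T}
    (hc : ContinuousOn f (Icc 0 1)) (hi : InjOn f (Icc 0 1))
    (h0 : f 0 = x) (h1 : f 1 = p) (hp : g • p = p) (hx : ¬ g • x = x)
    (hmeet : ∀ t ∈ Icc (0:ℝ) 1, g • f t = f t → f t = p) :
    ∃ γ : ℝ → T, ContinuousOn γ (Icc 0 1) ∧ InjOn γ (Icc 0 1) ∧ γ 0 = x ∧
      γ 1 = g • x ∧
      γ '' Icc 0 1 = f '' Icc 0 1 ∪ (fun z => g • z) '' (f '' Icc 0 1) ∧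
      γ (1/2) = p ∧ γ '' Icc 0 (1/2) = f '' Icc 0 1 ∧
      γ '' Icc (1/2) 1 = (fun z => g • z) '' (f '' Icc 0 1) := by
  have hxp : x ≠ p := by
    intro h; apply hx; rw [h]; exact hp
  have hAxp : ArcFrom x p (f '' Icc 0 1) := ⟨f, hc, hi, h0, h1, rfl⟩
  have hApgx : ArcFrom p (g • x) ((fun z => g • z) '' (f '' Icc 0 1)) := by
    have := smul_arc hcont g (arc_symm hAxp)
    rwa [hp] at this
  obtain ⟨f₂, hc₂, hi₂, h20, h21, him₂⟩ := hApgx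
  have hm : f 1 = f₂ 0 := by rw [h1, h20]
  have hint : f '' Icc 0 1 ∩ f₂ '' Icc 0 1 = {f 1} := by
    rw [him₂]
    apply Subset.antisymm
    · rintro y ⟨⟨t, htI, rfl⟩, ⟨z, hz, hzy⟩⟩
      obtain ⟨t', ht'I, rfl⟩ := hz
      simp only [] at hzy
      simp only [mem_singleton_iff]
      rcases eq_or_lt_of_le htI.2 with h | hlt
      · rw [h]
      rcases eq_or_lt_of_le ht'I.2 with h | hlt'
      · rw [h, h1, hp] at hzy
        rw [← hzy, h1]
      · have heq := shift_eq hRT hcont hnn hc hi (g := g) (by rw [h1]; exact hp)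
          ⟨htI.1, hlt⟩ ⟨ht'I.1, hlt'⟩ hzy
        rw [heq] at hzy
        have hfp := hmeet t' ht'I hzy
        rw [heq, hfp, h1]
    · rintro y rfl
      constructor
      · exact ⟨1, by norm_num, rfl⟩
      · exact ⟨f 1, ⟨1, by norm_num, rfl⟩, by show g • f 1 = f 1; rw [h1]; exact hp⟩
  obtain ⟨γ, hγc, hγi, hγ0, hγ1, hγim, hγhalf, hγim1, hγim2⟩ :=
    concat_param hc hi hc₂ hi₂ hm hint
  exact ⟨γ, hγc, hγi, by rw [hγ0, h0], by rw [hγ1, h21], by rw [hγim, him₂],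
    by rw [hγhalf, h1], hγim1, by rw [hγim2, him₂]⟩

lemma tripod (hRT : IsRTree T) {p q x : T} (hpq : p ≠ q) (hpx : p ≠ x) (hqx : q ≠ x)
    {Apq Apx Aqx : Set T} (h1 : ArcFrom p q Apq) (h2 : ArcFrom p x Apx)
    (h3 : ArcFrom q x Aqx) : ∃ m, m ∈ Apq ∧ m ∈ Apx ∧ m ∈ Aqx := by
  obtain ⟨f, hc, hi, hf0, hf1, hfim⟩ := h2
  set S : Set ℝ := Icc 0 1 ∩ f ⁻¹' Apq with hS
  have hScl : IsClosed S := hc.preimage_isClosed_of_isClosed isClosed_Icc (arc_isClosed h1)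
  have h0S : (0:ℝ) ∈ S := ⟨by norm_num, by rw [mem_preimage, hf0]; exact arc_left_mem h1⟩
  have hbdd : BddAbove S := ⟨1, fun z hz => hz.1.2⟩
  set s := sSup S with hs
  have hsS : s ∈ S := hScl.csSup_mem ⟨0, h0S⟩ hbdd
  set m := f s with hm
  have hmApq : m ∈ Apq := hsS.2
  have hmApx : m ∈ Apx := by rw [← hfim]; exact ⟨s, hsS.1, rfl⟩
  refine ⟨m, hmApq, hmApx, ?_⟩
  by_cases hmx : m = x
  · rw [hmx]; exact arc_right_mem h3
  by_cases hmq : m = q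
  · rw [hmq]; exact arc_left_mem h3
  have hs1 : s < 1 := by
    rcases eq_or_lt_of_le hsS.1.2 with h | h
    · exact absurd (by rw [hm, h, hf1]) hmx
    · exact h
  -- m = g u on Apq
  obtain ⟨gp, hgc, hgi, hg0, hg1, hgim⟩ := h1
  have : m ∈ gp '' Icc 0 1 := by rw [hgim]; exact hmApq
  obtain ⟨u, huI, hu⟩ := this
  have hu1 : u < 1 := by
    rcases eq_or_lt_of_le huI.2 with h | h
    · exact absurd (by rw [← hu, h, hg1]) hmq
    · exact h
  have hA1 : ArcFrom m q (gp '' Icc u 1) := by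
    have := subarc hgc hgi huI.1 hu1 le_rfl
    rwa [hu, hg1] at this
  have hA2 : ArcFrom m x (f '' Icc s 1) := by
    have := subarc hc hi hsS.1.1 hs1 le_rfl
    rwa [hf1] at this
  have hint : gp '' Icc u 1 ∩ f '' Icc s 1 = {m} := by
    apply Subset.antisymm
    · rintro y ⟨⟨v, hv, rfl⟩, ⟨t, ht, hty⟩⟩
      have htS : t ∈ S := by
        refine ⟨⟨le_trans hsS.1.1 ht.1, ht.2⟩, ?_⟩
        rw [mem_preimage, hty, ← hgim]
        exact ⟨v, ⟨le_trans huI.1 hv.1, hv.2⟩, rfl⟩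
      have hts : t ≤ s := le_csSup hbdd htS
      have : t = s := le_antisymm hts ht.1
      rw [← hty, this]
      rfl
    · rintro y rfl
      exact ⟨⟨u, ⟨le_rfl, hu1.le⟩, hu⟩, ⟨s, ⟨le_rfl, hs1.le⟩, rfl⟩⟩
  -- concatenate q→m and m→x
  obtain ⟨f₁, hc₁, hi₁, h10, h11, him₁⟩ := arc_symm hA1
  obtain ⟨f₂, hc₂, hi₂, h20, h21, him₂⟩ := hA2
  have hm12 : f₁ 1 = f₂ 0 := by rw [h11, h20]
  have hint' : f₁ '' Icc 0 1 ∩ f₂ '' Icc 0 1 = {f₁ 1} := by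
    rw [him₁, him₂, h11, hint]
  obtain ⟨γ, hγc, hγi, hγ0, hγ1, hγim, -, -, -⟩ := concat_param hc₁ hi₁ hc₂ hi₂ hm12 hint'
  have harc : ArcFrom q x (gp '' Icc u 1 ∪ f '' Icc s 1) := by
    refine ⟨γ, hγc, hγi, by rw [hγ0, h10], by rw [hγ1, h21], ?_⟩
    rw [hγim, him₁, him₂]
  have := arc_eq hRT h3 harc
  rw [this]
  exact Or.inl (arc_left_mem hA1)

end ActionAux

section Main
variable {T G : Type*} [MetricSpace T] [Group G] [MulAction G T]

lemma serre2 (hRT : IsRTree T) (hcont : ∀ g : G, Continuous fun x : T => g • x)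
    (hnn : NonNesting G T) (hell : ∀ g : G, ∃ x : T, g • x = x) (g h : G) :
    ∃ z : T, g • z = z ∧ h • z = z := by
  by_contra hdis
  push_neg at hdis
  obtain ⟨w, hw⟩ := hell (g * h)
  have hw' : g • (h • w) = w := by rw [← mul_smul]; exact hw
  have hwFh : ¬ h • w = w := by
    intro he
    have hgw : g • w = w := by rw [← he]; rw [he] at hw'; rwa [he]
    exact hdis w hgw he
  have hwFg : ¬ g • w = w := by
    intro hgw
    have : h • w = w := smul_left_cancel g (by rw [hw', hgw])
    exact hwFh this
  have hhwFg : ¬ g • (h • w) = h • w := by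
    intro he
    rw [hw'] at he
    exact hwFh he.symm
  -- projection of w onto Fix h
  have hFhcl : IsClosed {z : T | h • z = z} := isClosed_eq (hcont h) continuous_id
  have hFgcl : IsClosed {z : T | g • z = z} := isClosed_eq (hcont g) continuous_id
  obtain ⟨yh, hyh⟩ := hell h
  obtain ⟨yg, hyg⟩ := hell g
  obtain ⟨β, hβh, f, hc, hi, h0, h1, hfmeet⟩ :=
    proj_exists hRT hFhcl (show yh ∈ {z : T | h • z = z} from hyh) (by simpa using hwFh)
  have hβh' : h • β = β := hβh
  obtain ⟨γ, hγc, hγi, hγ0, hγ1, hγim, hγhalf, hγim1, hγim2⟩ :=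
    reflect hRT hcont hnn hc hi h0 h1 hβh' hwFh
      (fun t htI hfix => by
        have : f t ∈ f '' Icc 0 1 ∩ {z : T | h • z = z} := ⟨⟨t, htI, rfl⟩, hfix⟩
        rw [hfmeet] at this; exact this)
  -- projection of h•w onto Fix g
  obtain ⟨α, hαg, f', hc', hi', h0', h1', hfmeet'⟩ :=
    proj_exists hRT hFgcl (show yg ∈ {z : T | g • z = z} from hyg) (by simpa using hhwFg)
  have hαg' : g • α = α := hαg
  obtain ⟨γ', hγc', hγi', hγ0', hγ1', hγim', hγhalf', hγim1', hγim2'⟩ :=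
    reflect hRT hcont hnn hc' hi' h0' h1' hαg' hhwFg
      (fun t htI hfix => by
        have : f' t ∈ f' '' Icc 0 1 ∩ {z : T | g • z = z} := ⟨⟨t, htI, rfl⟩, hfix⟩
        rw [hfmeet'] at this; exact this)
  set B := f '' Icc 0 1 with hB
  set C := f' '' Icc 0 1 with hC
  have hDarc : ArcFrom w (h • w) (γ '' Icc 0 1) := ⟨γ, hγc, hγi, hγ0, hγ1, rfl⟩
  have hD'arc : ArcFrom w (h • w) (γ' '' Icc 0 1) := by
    apply arc_symm
    refine ⟨γ', hγc', hγi', hγ0', ?_, rfl⟩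
    rw [hγ1', hw']
  have hDD' : γ '' Icc 0 1 = γ' '' Icc 0 1 := arc_eq hRT hDarc hD'arc
  -- α lies on D
  have hαD : α ∈ γ '' Icc 0 1 := by
    rw [hDD', hγim']
    exact Or.inl (by rw [← h1']; exact ⟨1, by norm_num, rfl⟩)
  obtain ⟨a, haI, hγa⟩ := hαD
  have hαw : α ≠ w := by intro he; rw [he] at hαg'; exact hwFg hαg'
  have hαhw : α ≠ h • w := by intro he; rw [he] at hαg'; exact hhwFg hαg'
  have hβw : β ≠ w := by intro he; rw [he] at hβh'; exact hwFh hβh'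
  have ha0 : 0 < a := by
    rcases eq_or_lt_of_le haI.1 with hh | hh
    · exact absurd (by rw [← hγa, ← hh, hγ0]) hαw
    · exact hh
  have ha1 : a < 1 := by
    rcases eq_or_lt_of_le haI.2 with hh | hh
    · exact absurd (by rw [← hγa, hh, hγ1]) hαhw
    · exact hh
  have hwFgh : (g * h) • w = w := hw
  rcases lt_trichotomy a (1/2) with hlt | heq | hgt
  · -- a < 1/2 : contradiction via non-nesting for g*h on arc [w, β]
    -- g '' C = γ '' Icc 0 a
    have hsubwα : ArcFrom w α (γ '' Icc 0 a) := by
      have := subarc hγc hγi le_rfl ha0 haI.2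
      rwa [hγ0, hγa] at this
    have hgCarc : ArcFrom w α ((fun z => g • z) '' C) := by
      have hCarc : ArcFrom (h • w) α C := ⟨f', hc', hi', h0', h1', rfl⟩
      have := smul_arc hcont g hCarc
      rwa [hw', hαg'] at this
    have hgC : (fun z => g • z) '' C = γ '' Icc 0 a := arc_eq hRT hgCarc hsubwα
    -- C = γ '' Icc a 1
    have hsubαhw : ArcFrom α (h • w) (γ '' Icc a 1) := by
      have := subarc hγc hγi haI.1 ha1 le_rfl
      rwa [hγa, hγ1] at this
    have hCγ : C = γ '' Icc a 1 := by
      have hCarc : ArcFrom α (h • w) C := arc_symm ⟨f', hc', hi', h0', h1', rfl⟩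
      exact arc_eq hRT hCarc hsubαhw
    have hβC : β ∈ C := by
      rw [hCγ, ← hγhalf]
      exact ⟨1/2, ⟨hlt.le, by norm_num⟩, rfl⟩
    have hgβ : g • β ∈ γ '' Icc 0 a := by
      rw [← hgC]; exact ⟨β, hβC, rfl⟩
    obtain ⟨c, hcI, hγcβ⟩ := hgβ
    have hghβ : (g * h) • β = γ c := by rw [mul_smul, hβh', hγcβ]
    have hc0 : 0 < c := by
      rcases eq_or_lt_of_le hcI.1 with hh | hh
      · exfalso
        have : (g * h) • β = w := by rw [hghβ, ← hh, hγ0]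
        have : (g * h) • β = (g * h) • w := by rw [this, hwFgh]
        exact hβw (smul_left_cancel _ this)
      · exact hh
    have hchalf : c < 1/2 := lt_of_le_of_lt hcI.2 hlt
    have hEarc : ArcFrom w β (γ '' Icc 0 (1/2)) := by
      have := subarc hγc hγi le_rfl (by norm_num : (0:ℝ) < 1/2) (by norm_num)
      rwa [hγ0, hγhalf] at this
    refine hnn (g * h) w β (γ '' Icc 0 (1/2)) hEarc ?_
    have himE : (fun z => (g * h) • z) '' (γ '' Icc 0 (1/2)) = γ '' Icc 0 c := by
      have h1' := smul_arc hcont (g * h) hEarc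
      rw [hwFgh, hghβ] at h1'
      have h2' : ArcFrom w (γ c) (γ '' Icc 0 c) := by
        have := subarc hγc hγi le_rfl hc0 (by linarith)
        rwa [hγ0] at this
      exact arc_eq hRT h1' h2'
    rw [himE]
    constructor
    · exact image_mono (f := γ) (Icc_subset_Icc le_rfl hchalf.le)
    · intro hsub
      have : γ (1/2) ∈ γ '' Icc 0 c := hsub ⟨1/2, ⟨by norm_num, le_rfl⟩, rfl⟩
      obtain ⟨d, hd, hdeq⟩ := this
      have : d = 1/2 := hγi ⟨hd.1, by linarith [hd.2]⟩ (by norm_num) hdeq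
      rw [this] at hd
      linarith [hd.2]
  · -- a = 1/2 : α = β, common fixed point
    have : α = β := by rw [← hγa, heq, hγhalf]
    exact hdis α hαg' (by rw [this]; exact hβh')
  · -- a > 1/2 : contradiction via non-nesting for (g*h)⁻¹ on arc [w, α]
    have hαhB : α ∈ (fun z => h • z) '' B := by
      rw [← hγim2, ← hγa]
      exact ⟨a, ⟨hgt.le, haI.2⟩, rfl⟩
    obtain ⟨z, hzB, hzα⟩ := hαhB
    have hzγ : z ∈ γ '' Icc 0 (1/2) := by rw [hγim1]; exact hzB
    obtain ⟨c, hcI, hγcz⟩ := hzγ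
    have hinvw : (g * h)⁻¹ • w = w := by rw [inv_smul_eq_iff]; exact hwFgh.symm
    have hinvα : (g * h)⁻¹ • α = γ c := by
      rw [mul_inv_rev, mul_smul]
      have : g⁻¹ • α = α := by rw [inv_smul_eq_iff]; exact hαg'.symm
      rw [this, ← hzα, inv_smul_smul, hγcz]
    have hc0 : 0 < c := by
      rcases eq_or_lt_of_le hcI.1 with hh | hh
      · exfalso
        have : (g * h)⁻¹ • α = w := by rw [hinvα, ← hh, hγ0]
        have : (g * h)⁻¹ • α = (g * h)⁻¹ • w := by rw [this, hinvw]
        exact hαw (smul_left_cancel _ this)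
      · exact hh
    have hca : c < a := lt_of_le_of_lt hcI.2 hgt
    have hEarc : ArcFrom w α (γ '' Icc 0 a) := by
      have := subarc hγc hγi le_rfl ha0 haI.2
      rwa [hγ0, hγa] at this
    refine hnn (g * h)⁻¹ w α (γ '' Icc 0 a) hEarc ?_
    have himE : (fun z => (g * h)⁻¹ • z) '' (γ '' Icc 0 a) = γ '' Icc 0 c := by
      have h1' := smul_arc hcont (g * h)⁻¹ hEarc
      rw [hinvw, hinvα] at h1'
      have h2' : ArcFrom w (γ c) (γ '' Icc 0 c) := by
        have := subarc hγc hγi le_rfl hc0 (by linarith)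
        rwa [hγ0] at this
      exact arc_eq hRT h1' h2'
    rw [himE]
    constructor
    · exact image_mono (f := γ) (Icc_subset_Icc le_rfl hca.le)
    · intro hsub
      have : γ a ∈ γ '' Icc 0 c := hsub ⟨a, ⟨haI.1, le_rfl⟩, rfl⟩
      obtain ⟨d, hd, hdeq⟩ := this
      have : d = a := hγi ⟨hd.1, by linarith [hd.2, hca, haI.2]⟩ haI hdeq
      rw [this] at hd
      linarith [hd.2]

lemma finset_fix (hRT : IsRTree T) (hcont : ∀ g : G, Continuous fun x : T => g • x)
    (hnn : NonNesting G T) (hell : ∀ g : G, ∃ x : T, g • x = x)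
    (S : Set G) (hfin : S.Finite) : ∃ x : T, ∀ g ∈ S, g • x = x := by
  refine Set.Finite.induction_on (motive := fun S _ => ∃ x : T, ∀ g ∈ S, g • x = x) S hfin ?_ ?_
  · obtain ⟨x, _⟩ := hell 1
    exact ⟨x, fun g hg => absurd hg (notMem_empty g)⟩
  · rintro a S' - - IH
    obtain ⟨x0, hx0⟩ := IH
    by_cases hF : ∃ z : T, (∀ g ∈ S', g • z = z) ∧ a • z = z
    · obtain ⟨z, hz1, hz2⟩ := hF
      refine ⟨z, fun g hg => ?_⟩
      rcases hg with hg | hg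
      · rw [hg]; exact hz2
      · exact hz1 g hg
    push_neg at hF
    exfalso
    set F : Set T := {z | ∀ g ∈ S', g • z = z} with hFdef
    have hFcl : IsClosed F := by
      have : F = ⋂ g ∈ S', {z : T | g • z = z} := by
        ext z; simp [hFdef]
      rw [this]
      exact isClosed_biInter (fun g _ => isClosed_eq (hcont g) continuous_id)
    obtain ⟨q₀, hq₀⟩ := hell a
    have hq₀F : q₀ ∉ F := fun hq => hF q₀ hq hq₀
    have hx0F : x0 ∈ F := hx0
    obtain ⟨p, hpF, f, hc, hi, h0, h1, hmeet⟩ := proj_exists hRT hFcl hx0F hq₀F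
    -- reverse the arc: from p to q₀
    obtain ⟨δ, hδc, hδi, hδ0, hδ1, hδim⟩ :=
      arc_symm (⟨f, hc, hi, h0, h1, rfl⟩ : ArcFrom q₀ p (f '' Icc 0 1))
    have hpa : ¬ a • p = p := fun hp => hF p hpF hp
    obtain ⟨s, hs0, hs1, hsFa, hmeet2⟩ :=
      firsthit hδc hδi (C := {z : T | a • z = z}) (isClosed_eq (hcont a) continuous_id) (by rwa [hδ0]) (by rw [hδ1]; exact hq₀)
    set q := δ s with hq
    have haq : a • q = q := hsFa
    have hA2 : ArcFrom p q (δ '' Icc 0 s) := by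
      have := subarc hδc hδi le_rfl hs0 hs1
      rwa [hδ0] at this
    have hclaim : ∀ g ∈ S', g • q = q := by
      intro g hgS
      obtain ⟨xg, hxg1, hxg2⟩ := serre2 hRT hcont hnn hell g a
      by_cases hqx : q = xg
      · rw [hqx]; exact hxg1
      have hpq : p ≠ q := by intro he; rw [he] at hpa; exact hpa haq
      have hpx : p ≠ xg := by intro he; rw [he] at hpa; exact hpa hxg2
      obtain ⟨Apx, hApx⟩ := exists_arc hRT hpx
      obtain ⟨Aqx, hAqx⟩ := exists_arc hRT hqx
      obtain ⟨m, hm1, hm2, hm3⟩ := tripod hRT hpq hpx hqx hA2 hApx hAqx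
      have ham : a • m = m := fix_convex hRT hcont hnn haq hxg2 hAqx m hm3
      have hmq : m = q := by
        have : m ∈ (δ '' Icc 0 s) ∩ {z : T | a • z = z} := ⟨hm1, ham⟩
        rw [hmeet2] at this
        exact this
      rw [← hmq]
      exact fix_convex hRT hcont hnn (hpF g hgS) hxg1 hApx m hm2
    exact hF q hclaim haq

end Main

theorem stmt17 {T G : Type*} [MetricSpace T] [Group G] [MulAction G T]
    (hRT : IsRTree T) (hcont : ∀ g : G, Continuous fun x : T => g • x)
    (hnn : NonNesting G T) (hfg : Group.FG G)
    (hell : ∀ g : G, ∃ x : T, g • x = x) :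
    ∃ x : T, ∀ g : G, g • x = x := by
  obtain ⟨S, hScl, hSfin⟩ := Group.fg_iff.mp hfg
  obtain ⟨x, hx⟩ := finset_fix hRT hcont hnn hell S hSfin
  refine ⟨x, fun g => ?_⟩
  have hle : Subgroup.closure S ≤ MulAction.stabilizer G x := by
    rw [Subgroup.closure_le]
    intro g hg
    rw [SetLike.mem_coe, MulAction.mem_stabilizer_iff]
    exact hx g hg
  have : g ∈ MulAction.stabilizer G x := hle (by rw [hScl]; trivial)
  exact this
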